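/- Let G be a countable group, let μ be a probability measure on G, and let η : G → ℝ be a signed measure with ∑_{g∈G} |η(g)| < ∞ that is balanced (∑_{g∈G} η(g) = 0) and absolutely continuous with respect to μ (η(g) = 0 whenever μ(g) = 0). Then lim_{k→∞} (1/k) · ‖∑_{i=1}^{k} μ^{*(i−1)} * η * μ^{*(k−i)}‖₀ = 0, i.e. (1/k) ∑_{g∈G} |∑_{i=1}^{k}(μ^{*(i−1)} * η * μ^{*(k−i)})(g)| → 0 as k → ∞. -/

import Mathlib

open Filter Topology Pointwise

/-- `μ` is a probability measure on the countable group `G`. -/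
def IsProbMeasure {G : Type*} (μ : G → ℝ) : Prop :=
  (∀ g, 0 ≤ μ g) ∧ Summable μ ∧ ∑' g, μ g = 1

/-- Convolution of two (signed) measures on `G`. -/
noncomputable def conv {G : Type*} [Group G] (μ ν : G → ℝ) : G → ℝ :=
  fun g => ∑' h : G, μ h * ν (h⁻¹ * g)

/-- `n`-fold convolution power of `μ`, with `convPow μ 0` the point mass at the identity. -/
noncomputable def convPow {G : Type*} [Group G] (μ : G → ℝ) : ℕ → G → ℝ
  | 0 => ({1} : Set G).indicator fun _ => (1 : ℝ)
  | n + 1 => conv μ (convPow μ n)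

set_option maxHeartbeats 1000000

namespace BCD

variable {H : Type*} [Group H]

/-- the shear equivalence (h, z) ↦ (h, h * z) -/
def shear (H : Type*) [Group H] : H × H ≃ H × H where
  toFun q := (q.1, q.1 * q.2)
  invFun q := (q.1, q.1⁻¹ * q.2)
  left_inv q := by simp
  right_inv q := by simp

theorem summable_master {a b : H → ℝ} (ha : Summable fun x => |a x|)
    (hb : Summable fun x => |b x|) :
    Summable (fun q : H × H => |a q.1| * |b (q.1⁻¹ * q.2)|) := by
  have ha' : Summable fun x => ‖a x‖ := ha.congr fun x => (Real.norm_eq_abs _).symm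
  have hb' : Summable fun x => ‖b x‖ := hb.congr fun x => (Real.norm_eq_abs _).symm
  have h0 : Summable (fun q : H × H => ‖a q.1 * b q.2‖) := ha'.mul_norm hb' 
  have h1 : Summable (fun q : H × H => |a q.1| * |b q.2|) :=
    h0.congr fun q => by rw [Real.norm_eq_abs, abs_mul]
  refine (shear H).summable_iff.1 (h1.congr fun q => ?_)
  show |a q.1| * |b q.2| = |a ((shear H) q).1| * |b ((((shear H) q).1)⁻¹ * ((shear H) q).2)|
  simp [shear]

theorem summable_inner_abs {a b : H → ℝ} (ha : Summable fun x => |a x|)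
    (hb : Summable fun x => |b x|) (g : H) :
    Summable (fun h => |a h| * |b (h⁻¹ * g)|) :=
  (summable_master ha hb).comp_injective
    (i := fun h : H => (h, g)) (fun _ _ hxy => congrArg Prod.fst hxy)

theorem summable_inner {a b : H → ℝ} (ha : Summable fun x => |a x|)
    (hb : Summable fun x => |b x|) (g : H) :
    Summable (fun h => a h * b (h⁻¹ * g)) :=
  Summable.of_abs ((summable_inner_abs ha hb g).congr fun h => (abs_mul _ _).symm)

theorem conv_abs_le {a b : H → ℝ} (ha : Summable fun x => |a x|)
    (hb : Summable fun x => |b x|) (g : H) :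
    |conv a b g| ≤ ∑' h, |a h| * |b (h⁻¹ * g)| := by
  have := norm_tsum_le_tsum_norm (f := fun h => a h * b (h⁻¹ * g))
    ((summable_inner_abs ha hb g).congr fun h => by rw [Real.norm_eq_abs, abs_mul])
  calc |conv a b g| = ‖∑' h, a h * b (h⁻¹ * g)‖ := by rw [conv, Real.norm_eq_abs]
    _ ≤ ∑' h, ‖a h * b (h⁻¹ * g)‖ := this
    _ = ∑' h, |a h| * |b (h⁻¹ * g)| := tsum_congr fun h => by rw [Real.norm_eq_abs, abs_mul]

/-- summability of the "abs majorant" of a convolution, with total sum -/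
theorem hasSum_convMaj {a b : H → ℝ} (ha : Summable fun x => |a x|)
    (hb : Summable fun x => |b x|) :
    HasSum (fun g : H => ∑' h, |a h| * |b (h⁻¹ * g)|)
      ((∑' x, |a x|) * (∑' x, |b x|)) := by
  have hm : Summable (fun q : H × H => |a q.2| * |b (q.2⁻¹ * q.1)|) :=
    ((Equiv.prodComm H H).summable_iff).1 ((summable_master ha hb).congr fun q => rfl)
  have hswap := (Equiv.prodComm H H).tsum_eq (fun q : H × H => |a q.2| * |b (q.2⁻¹ * q.1)|)
  simp only [Equiv.prodComm_apply, Prod.snd_swap, Prod.fst_swap] at hswap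
  have hmv : ∑' q : H × H, |a q.2| * |b (q.2⁻¹ * q.1)| = (∑' x, |a x|) * (∑' x, |b x|) := by
    rw [← hswap, Summable.tsum_prod' (summable_master ha hb) (fun h => (((Equiv.mulLeft h⁻¹).summable_iff.2 hb).mul_left |a h| : Summable fun c => |a h| * |b (h⁻¹ * c)|))]
    have h1 : ∀ h : H, ∑' g, |a h| * |b (h⁻¹ * g)| = |a h| * ∑' x, |b x| := by
      intro h
      rw [tsum_mul_left]
      congr 1
      exact (Equiv.mulLeft h⁻¹).tsum_eq fun x => |b x|
    rw [tsum_congr h1, tsum_mul_right]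
  rw [← hmv]
  exact hm.hasSum.prod_fiberwise fun g => (summable_inner_abs ha hb g).hasSum

theorem summable_conv_abs {a b : H → ℝ} (ha : Summable fun x => |a x|)
    (hb : Summable fun x => |b x|) :
    Summable (fun g : H => |conv a b g|) :=
  Summable.of_nonneg_of_le (fun _ => abs_nonneg _) (fun g => conv_abs_le ha hb g)
    (hasSum_convMaj ha hb).summable

theorem tsum_conv_abs_le {a b : H → ℝ} (ha : Summable fun x => |a x|)
    (hb : Summable fun x => |b x|) :
    ∑' g, |conv a b g| ≤ (∑' x, |a x|) * (∑' x, |b x|) := by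
  rw [← (hasSum_convMaj ha hb).tsum_eq]
  exact Summable.tsum_le_tsum (fun g => conv_abs_le ha hb g) (summable_conv_abs ha hb)
    (hasSum_convMaj ha hb).summable

/-- second shear: (y, z) ↦ (y * z, y) -/
def shear2 (H : Type*) [Group H] : H × H ≃ H × H where
  toFun q := (q.1 * q.2, q.1)
  invFun q := (q.2, q.2⁻¹ * q.1)
  left_inv q := by simp
  right_inv q := by simp

/-- Master weighted Fubini lemma for convolutions. -/
theorem hasSum_weight_conv {a b φ : H → ℝ} (ha : Summable fun x => |a x|)
    (hb : Summable fun x => |b x|)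
    (hw : Summable fun q : H × H => |φ (q.1 * q.2) * (a q.1 * b q.2)|) :
    HasSum (fun x => φ x * conv a b x)
      (∑' y, ∑' z, φ (y * z) * (a y * b z)) := by
  set F : H × H → ℝ := fun q => φ q.1 * (a q.2 * b (q.2⁻¹ * q.1)) with hF
  have hFe : Summable (F ∘ (shear2 H)) := by
    refine (hw.of_abs).congr fun q => ?_
    show φ (q.1 * q.2) * (a q.1 * b q.2) = F ((shear2 H) q)
    simp [F, shear2]
  have hFs : Summable F := (shear2 H).summable_iff.1 hFe
  have hfib : ∀ x : H, HasSum (fun h => F (x, h)) (φ x * conv a b x) := by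
    intro x
    have hsl : Summable fun h => F (x, h) := hFs.prod_factor x
    have : ∑' h, F (x, h) = φ x * conv a b x := by
      show ∑' h, φ x * (a h * b (h⁻¹ * x)) = φ x * conv a b x
      exact tsum_mul_left
    exact this ▸ hsl.hasSum
  have hmain : HasSum (fun x => φ x * conv a b x) (∑' q : H × H, F q) :=
    hFs.hasSum.prod_fiberwise hfib
  have hval : ∑' q : H × H, F q = ∑' y, ∑' z, φ (y * z) * (a y * b z) := by
    rw [← (shear2 H).tsum_eq F]
    have : ∀ q : H × H, F ((shear2 H) q) = φ (q.1 * q.2) * (a q.1 * b q.2) := by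
      intro q; simp [F, shear2]
    rw [tsum_congr this]
    exact Summable.tsum_prod' (hFe.congr (fun q => (this q))) (fun y => (hFe.congr (fun q => this q)).prod_factor y)
  rwa [hval] at hmain

theorem summable_weight_of_bounded {a b φ : H → ℝ} {M : ℝ}
    (ha : Summable fun x => |a x|) (hb : Summable fun x => |b x|)
    (hM : ∀ y z : H, a y ≠ 0 → b z ≠ 0 → |φ (y * z)| ≤ M) :
    Summable fun q : H × H => |φ (q.1 * q.2) * (a q.1 * b q.2)| := by
  have ha' : Summable fun x => ‖a x‖ := ha.congr fun x => (Real.norm_eq_abs _).symm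
  have hb' : Summable fun x => ‖b x‖ := hb.congr fun x => (Real.norm_eq_abs _).symm
  have hmaj : Summable fun q : H × H => M * (|a q.1| * |b q.2|) := by
    refine Summable.mul_left M ((ha'.mul_norm hb').congr fun q => ?_)
    rw [Real.norm_eq_abs, abs_mul]
  refine Summable.of_nonneg_of_le (fun q => abs_nonneg _) (fun q => ?_) hmaj
  rcases eq_or_ne (a q.1) 0 with h | h
  · simp only [h, zero_mul, mul_zero, abs_zero]
    positivity
  rcases eq_or_ne (b q.2) 0 with h2 | h2
  · simp only [h2, mul_zero, abs_zero]
    positivity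
  · rw [abs_mul, abs_mul]
    have := hM q.1 q.2 h h2
    have hMn : 0 ≤ M := le_trans (abs_nonneg _) this
    nlinarith [abs_nonneg (a q.1), abs_nonneg (b q.2), mul_le_mul_of_nonneg_right this
      (mul_nonneg (abs_nonneg (a q.1)) (abs_nonneg (b q.2)))]

theorem summable_weight_of_subadd {a b φ ψ χ : H → ℝ}
    (hψ : ∀ x, 0 ≤ ψ x) (hχ : ∀ x, 0 ≤ χ x)
    (ha : Summable fun x => ψ x * |a x|) (hb : Summable fun x => |b x|)
    (ha' : Summable fun x => |a x|) (hb' : Summable fun x => χ x * |b x|)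
    (hle : ∀ y z : H, a y ≠ 0 → b z ≠ 0 → |φ (y * z)| ≤ ψ y + χ z) :
    Summable fun q : H × H => |φ (q.1 * q.2) * (a q.1 * b q.2)| := by
  have t1 : Summable fun q : H × H => (ψ q.1 * |a q.1|) * |b q.2| := by
    have := (ha.congr (g := fun x => ‖ψ x * |a x|‖)
      (fun x => (Real.norm_of_nonneg (mul_nonneg (hψ x) (abs_nonneg _))).symm)).mul_norm
      (hb.congr (g := fun x => ‖|b x|‖) (fun x => (Real.norm_of_nonneg (abs_nonneg _)).symm))
    refine this.congr fun q => ?_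
    rw [Real.norm_eq_abs, abs_mul, abs_abs, abs_of_nonneg (mul_nonneg (hψ q.1) (abs_nonneg _))]
  have t2 : Summable fun q : H × H => |a q.1| * (χ q.2 * |b q.2|) := by
    have := (ha'.congr (g := fun x => ‖|a x|‖)
      (fun x => (Real.norm_of_nonneg (abs_nonneg _)).symm)).mul_norm
      (hb'.congr (g := fun x => ‖χ x * |b x|‖)
      (fun x => (Real.norm_of_nonneg (mul_nonneg (hχ x) (abs_nonneg _))).symm))
    refine this.congr fun q => ?_
    rw [Real.norm_eq_abs, abs_mul, abs_abs, abs_of_nonneg (mul_nonneg (hχ q.2) (abs_nonneg _))]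
  refine Summable.of_nonneg_of_le (fun q => abs_nonneg _) (fun q => ?_) (t1.add t2)
  rcases eq_or_ne (a q.1) 0 with h | h
  · simp only [h, zero_mul, mul_zero, abs_zero, abs_zero]
    positivity
  rcases eq_or_ne (b q.2) 0 with h2 | h2
  · simp only [h2, mul_zero, abs_zero]
    positivity
  · rw [abs_mul, abs_mul]
    have := hle q.1 q.2 h h2
    nlinarith [abs_nonneg (a q.1), abs_nonneg (b q.2), hψ q.1, hχ q.2,
      mul_le_mul_of_nonneg_right this (mul_nonneg (abs_nonneg (a q.1)) (abs_nonneg (b q.2)))]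

/-- total mass of a convolution (signed version) -/
theorem tsum_conv {a b : H → ℝ} (ha : Summable fun x => |a x|)
    (hb : Summable fun x => |b x|) :
    ∑' g, conv a b g = (∑' x, a x) * (∑' x, b x) := by
  have hw := summable_weight_of_bounded (φ := fun _ => (1:ℝ)) (M := 1) ha hb
    (fun _ _ _ _ => by simp)
  have h := hasSum_weight_conv (φ := fun _ => (1:ℝ)) ha hb hw
  have h2 : ∑' y, ∑' z, (1:ℝ) * (a y * b z) = (∑' x, a x) * (∑' x, b x) := by
    have : ∀ y, ∑' z, (1:ℝ) * (a y * b z) = a y * ∑' x, b x := by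
      intro y
      simp only [one_mul]
      exact tsum_mul_left
    rw [tsum_congr this, tsum_mul_right]
  have h3 := h.tsum_eq
  have h4 : ∀ g : H, (1:ℝ) * conv a b g = conv a b g := fun g => one_mul _
  rw [← tsum_congr h4, h3, h2]

theorem summable_conv {a b : H → ℝ} (ha : Summable fun x => |a x|)
    (hb : Summable fun x => |b x|) : Summable (conv a b) :=
  Summable.of_abs (summable_conv_abs ha hb)

theorem le_tsum_abs {c : H → ℝ} (hc : Summable fun x => |c x|) (z : H) :
    |c z| ≤ ∑' x, |c x| :=
  Summable.le_tsum hc z fun _ _ => abs_nonneg _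

theorem conv_assoc {a b c : H → ℝ} (ha : Summable fun x => |a x|)
    (hb : Summable fun x => |b x|) (hc : Summable fun x => |c x|) :
    conv (conv a b) c = conv a (conv b c) := by
  funext g
  have hsum : Summable fun q : H × H => a q.1 * b (q.1⁻¹ * q.2) * c (q.2⁻¹ * g) := by
    refine Summable.of_abs (Summable.of_nonneg_of_le (fun q => abs_nonneg _) (fun q => ?_)
      ((summable_master ha hb).mul_right (∑' x, |c x|)))
    rw [abs_mul, abs_mul]
    exact mul_le_mul_of_nonneg_left (le_tsum_abs hc _)
      (mul_nonneg (abs_nonneg _) (abs_nonneg _))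
  have hslice1 : ∀ m : H, Summable fun h => a m * b (m⁻¹ * h) * c (h⁻¹ * g) := by
    intro m
    have h0 : Summable fun h' => b h' * c (h'⁻¹ * (m⁻¹ * g)) := summable_inner hb hc _
    have h1 : Summable fun h => b (m⁻¹ * h) * c (h⁻¹ * g) := by
      refine ((Equiv.mulLeft m).summable_iff.1 (h0.congr fun h' => ?_))
      show b h' * c (h'⁻¹ * (m⁻¹ * g)) = b (m⁻¹ * (m * h')) * c ((m * h')⁻¹ * g)
      rw [inv_mul_cancel_left, mul_inv_rev, mul_assoc]
    exact (h1.mul_left (a m)).congr fun h => by ring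
  have hslice2 : ∀ h : H, Summable fun m => a m * b (m⁻¹ * h) * c (h⁻¹ * g) :=
    fun h => (summable_inner ha hb h).mul_right _
  have lhs : conv (conv a b) c g = ∑' h, ∑' m, a m * b (m⁻¹ * h) * c (h⁻¹ * g) := by
    rw [conv]
    refine tsum_congr fun h => ?_
    rw [conv, ← tsum_mul_right]
  have swap : ∑' h, ∑' m, a m * b (m⁻¹ * h) * c (h⁻¹ * g)
      = ∑' m, ∑' h, a m * b (m⁻¹ * h) * c (h⁻¹ * g) :=
    Summable.tsum_comm' hsum hslice1 hslice2
  have rhs : ∀ m : H, ∑' h, a m * b (m⁻¹ * h) * c (h⁻¹ * g) = a m * conv b c (m⁻¹ * g) := by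
    intro m
    have e1 : ∑' h', a m * b (m⁻¹ * (m * h')) * c ((m * h')⁻¹ * g)
        = ∑' h, a m * b (m⁻¹ * h) * c (h⁻¹ * g) :=
      (Equiv.mulLeft m).tsum_eq fun h => a m * b (m⁻¹ * h) * c (h⁻¹ * g)
    rw [← e1, conv, ← tsum_mul_left]
    refine tsum_congr fun h' => ?_
    rw [inv_mul_cancel_left, mul_inv_rev, mul_assoc, mul_assoc]
  rw [lhs, swap, tsum_congr rhs]
  rfl

theorem summable_delta_abs : Summable fun x : H => |(({1} : Set H).indicator fun _ => (1:ℝ)) x| := by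
  classical
  refine (hasSum_ite_eq (1 : H) (1:ℝ)).summable.congr fun x => ?_
  by_cases h : x = 1 <;> simp [Set.indicator_apply, h]

theorem delta_conv {b : H → ℝ} :
    conv (({1} : Set H).indicator fun _ => (1:ℝ)) b = b := by
  funext g
  rw [conv]
  rw [tsum_eq_single 1 (fun h hh => by simp [Set.indicator_apply, hh])]
  simp

theorem conv_sum {ι : Type*} {a : H → ℝ} {b : ι → H → ℝ} {s : Finset ι}
    (ha : Summable fun x => |a x|) (hb : ∀ i ∈ s, Summable fun x => |b i x|) :
    conv a (fun g => ∑ i ∈ s, b i g) = fun g => ∑ i ∈ s, conv a (b i) g := by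
  funext g
  rw [conv]
  have : ∀ h : H, a h * ∑ i ∈ s, b i (h⁻¹ * g) = ∑ i ∈ s, a h * b i (h⁻¹ * g) :=
    fun h => Finset.mul_sum _ _ _
  rw [tsum_congr this, Summable.tsum_finsetSum fun i hi => summable_inner ha (hb i hi) g]
  rfl

theorem convPow_nonneg {μ : H → ℝ} (hμ : ∀ g, 0 ≤ μ g) (k : ℕ) (g : H) :
    0 ≤ convPow μ k g := by
  induction k generalizing g with
  | zero => exact Set.indicator_nonneg (fun _ _ => zero_le_one) g
  | succ n ih => exact tsum_nonneg fun h => mul_nonneg (hμ h) (ih _)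

theorem summable_convPow_abs {μ : H → ℝ} (hμ : Summable fun x => |μ x|) (k : ℕ) :
    Summable fun x => |convPow μ k x| := by
  induction k with
  | zero => exact summable_delta_abs
  | succ n ih => exact summable_conv_abs hμ ih

theorem tsum_convPow {μ : H → ℝ} (hμ0 : ∀ g, 0 ≤ μ g) (hμ : Summable fun x => |μ x|)
    (hμ1 : ∑' g, μ g = 1) (k : ℕ) : ∑' g, convPow μ k g = 1 := by
  induction k with
  | zero =>
    rw [show (convPow μ 0 : H → ℝ) = ({1} : Set H).indicator fun _ => (1:ℝ) from rfl]
    rw [tsum_eq_single 1 (fun h hh => by simp [Set.indicator_apply, hh])]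
    simp
  | succ n ih =>
    rw [show (convPow μ (n+1) : H → ℝ) = conv μ (convPow μ n) from rfl,
      tsum_conv hμ (summable_convPow_abs hμ n), hμ1, ih, one_mul]

theorem exists_ne_zero_of_conv_ne_zero {a b : H → ℝ} {x : H} (h : conv a b x ≠ 0) :
    ∃ y, a y ≠ 0 ∧ b (y⁻¹ * x) ≠ 0 := by
  by_contra hc
  push_neg at hc
  refine h ?_
  rw [conv]
  rw [tsum_congr (f := fun y => a y * b (y⁻¹ * x)) (g := fun _ => (0:ℝ)) ?_, tsum_zero]
  intro y
  show a y * b (y⁻¹ * x) = 0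
  rcases eq_or_ne (a y) 0 with h1 | h1
  · rw [h1, zero_mul]
  · rw [hc y h1, mul_zero]

section Lifted

variable {G : Type*} [Group G]

abbrev HH (G : Type*) [Group G] := G × Multiplicative ℝ × Multiplicative ℝ

variable (fb fs : G → ℝ)

def liftF : G → HH G := fun g => (g, Multiplicative.ofAdd (fb g), Multiplicative.ofAdd (fs g))

open scoped Classical in
noncomputable def liftM (σ : G → ℝ) : HH G → ℝ :=
  fun x => if x = liftF fb fs x.1 then σ x.1 else 0

theorem liftF_injective : Function.Injective (liftF fb fs) :=
  fun _ _ h => congrArg Prod.fst h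

theorem mem_range_liftF {x : HH G} : x ∈ Set.range (liftF fb fs) ↔ x = liftF fb fs x.1 := by
  constructor
  · rintro ⟨g, rfl⟩; rfl
  · intro h; exact ⟨x.1, h.symm⟩

theorem liftM_apply_liftF (σ : G → ℝ) (g : G) : liftM fb fs σ (liftF fb fs g) = σ g := by
  simp only [liftM]
  exact if_pos rfl

theorem liftM_eq_zero (σ : G → ℝ) {x : HH G} (h : x ∉ Set.range (liftF fb fs)) :
    liftM fb fs σ x = 0 := by
  simp only [liftM]
  exact if_neg fun hc => h ((mem_range_liftF fb fs).2 hc)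

theorem tsum_liftM_weight (σ : G → ℝ) (φ : HH G → ℝ) :
    ∑' x : HH G, φ x * liftM fb fs σ x = ∑' g : G, φ (liftF fb fs g) * σ g := by
  rw [← Function.Injective.tsum_eq (liftF_injective fb fs)
    (f := fun x => φ x * liftM fb fs σ x) ?_]
  · exact tsum_congr fun g => by
      show φ (liftF fb fs g) * liftM fb fs σ (liftF fb fs g) = _
      rw [liftM_apply_liftF]
  · intro x hx
    rw [Function.mem_support] at hx
    by_contra hr
    exact hx (by show φ x * liftM fb fs σ x = 0; rw [liftM_eq_zero fb fs σ hr, mul_zero])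

theorem summable_liftM_weight {σ : G → ℝ} {φ : HH G → ℝ}
    (h : Summable fun g : G => φ (liftF fb fs g) * σ g) :
    Summable fun x : HH G => φ x * liftM fb fs σ x := by
  refine (Function.Injective.summable_iff (liftF_injective fb fs)
    (f := fun x => φ x * liftM fb fs σ x) ?_).1 ?_
  · intro x hx
    show φ x * liftM fb fs σ x = 0
    rw [liftM_eq_zero fb fs σ hx, mul_zero]
  · exact h.congr fun g => by
      show φ (liftF fb fs g) * σ g = φ (liftF fb fs g) * liftM fb fs σ (liftF fb fs g)
      rw [liftM_apply_liftF]

/-- the coordinate weights -/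
def UU : HH G → ℝ := fun x => Multiplicative.toAdd x.2.1
def VV : HH G → ℝ := fun x => Multiplicative.toAdd x.2.2
def WW : HH G → ℝ := fun x => UU x + VV x

theorem UU_mul (x y : HH G) : UU (x * y) = UU x + UU y := rfl
theorem VV_mul (x y : HH G) : VV (x * y) = VV x + VV y := rfl
theorem WW_mul (x y : HH G) : WW (x * y) = WW x + WW y := by
  rw [WW, WW, WW, UU_mul, VV_mul]; ring
theorem UU_liftF (g : G) : UU (liftF fb fs g) = fb g := rfl
theorem VV_liftF (g : G) : VV (liftF fb fs g) = fs g := rfl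
theorem UU_one : UU (1 : HH G) = 0 := rfl
theorem VV_one : VV (1 : HH G) = 0 := rfl

end Lifted

section Moments

variable {G : Type*} [Group G] {μ fb fs : G → ℝ}

theorem summable_liftM_abs {σ : G → ℝ} (hσ : Summable fun g => |σ g|) :
    Summable fun x : HH G => |liftM fb fs σ x| := by
  refine (Function.Injective.summable_iff (liftF_injective fb fs)
    (f := fun x => |liftM fb fs σ x|) ?_).1 ?_
  · intro x hx
    show |liftM fb fs σ x| = 0
    rw [liftM_eq_zero fb fs σ hx, abs_zero]
  · exact hσ.congr fun g => by
      show |σ g| = |liftM fb fs σ (liftF fb fs g)|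
      rw [liftM_apply_liftF]

theorem tsum_liftM_abs (σ : G → ℝ) :
    ∑' x : HH G, |liftM fb fs σ x| = ∑' g, |σ g| := by
  rw [← Function.Injective.tsum_eq (liftF_injective fb fs)
    (f := fun x => |liftM fb fs σ x|) ?_]
  · exact tsum_congr fun g => by
      show |liftM fb fs σ (liftF fb fs g)| = _
      rw [liftM_apply_liftF]
  · intro x hx
    rw [Function.mem_support] at hx
    by_contra hr
    exact hx (by show |liftM fb fs σ x| = 0; rw [liftM_eq_zero fb fs σ hr, abs_zero])

theorem liftM_nonneg (hμ0 : ∀ g, 0 ≤ μ g) (x : HH G) : 0 ≤ liftM fb fs μ x := by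
  simp only [liftM]
  split
  · exact hμ0 _
  · exact le_refl 0

theorem tsum_liftM (σ : G → ℝ) : ∑' x : HH G, liftM fb fs σ x = ∑' g, σ g := by
  have := tsum_liftM_weight fb fs σ (fun _ => (1:ℝ))
  simpa using this

theorem liftM_ne_zero_bound {B : ℝ} (hB : ∀ g, |fb g| ≤ B) {y : HH G}
    (hy : liftM fb fs μ y ≠ 0) : |UU y| ≤ B := by
  have h1 : y = liftF fb fs y.1 := by
    by_contra hc
    exact hy (by simp only [liftM]; exact if_neg hc)
  rw [h1, UU_liftF]
  exact hB _

theorem convPow_liftM_UU_bound {B : ℝ} (hB : ∀ g, |fb g| ≤ B) (k : ℕ) (x : HH G)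
    (hx : convPow (liftM fb fs μ) k x ≠ 0) : |UU x| ≤ k * B := by
  induction k generalizing x with
  | zero =>
    have : x = 1 := by
      by_contra hc
      exact hx (by simp [convPow, Set.indicator_apply, hc])
    rw [this, UU_one]
    simp
  | succ n ih =>
    obtain ⟨y, hy1, hy2⟩ := exists_ne_zero_of_conv_ne_zero hx
    have hxeq : x = y * (y⁻¹ * x) := (mul_inv_cancel_left y x).symm
    calc |UU x| ≤ |UU y| + |UU (y⁻¹ * x)| := by
          rw [show UU x = UU y + UU (y⁻¹ * x) by rw [← UU_mul, mul_inv_cancel_left]]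
          exact abs_add_le _ _
      _ ≤ B + n * B := add_le_add (liftM_ne_zero_bound hB hy1) (ih _ hy2)
      _ = (n + 1 : ℕ) * B := by push_cast; ring

end Moments

section Moments2

variable {G : Type*} [Group G] {μ fb fs : G → ℝ} {B : ℝ}

local notation "mm" => liftM fb fs μ

theorem meanU (hμ0 : ∀ g, 0 ≤ μ g) (hμs : Summable fun g => |μ g|) (hμ1 : ∑' g, μ g = 1)
    (hB : ∀ g, |fb g| ≤ B) (hfbs : Summable fun g => fb g * μ g)
    (hfb0 : ∑' g, fb g * μ g = 0) (k : ℕ) :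
    (Summable fun x : HH G => UU x * convPow mm k x) ∧
      ∑' x : HH G, UU x * convPow mm k x = 0 := by
  have hms : Summable fun x : HH G => |mm x| := summable_liftM_abs hμs
  have hρs : ∀ j, Summable fun x : HH G => |convPow mm j x| :=
    fun j => summable_convPow_abs hms j
  have hρ1 : ∀ j, ∑' x : HH G, convPow mm j x = 1 :=
    tsum_convPow (liftM_nonneg hμ0) hms (by rw [tsum_liftM]; exact hμ1)
  induction k with
  | zero =>
    have hz : ∀ x : HH G, UU x * convPow mm 0 x = 0 := by
      intro x
      rcases eq_or_ne x 1 with h | h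
      · rw [h, UU_one, zero_mul]
      · rw [show convPow mm 0 x = 0 by simp [convPow, Set.indicator_apply, h], mul_zero]
    constructor
    · exact summable_zero.congr fun x => (hz x).symm
    · rw [tsum_congr hz, tsum_zero]
  | succ n ih =>
    have hw := summable_weight_of_bounded (φ := UU) (M := B + n * B) hms (hρs n)
      (fun y z hy hz => by
        rw [UU_mul]
        exact (abs_add_le _ _).trans
          (add_le_add (liftM_ne_zero_bound hB hy) (convPow_liftM_UU_bound hB n z hz)))
    have H := hasSum_weight_conv (φ := UU) hms (hρs n) hw
    have hval : ∀ y : HH G, ∑' z : HH G, UU (y * z) * (mm y * convPow mm n z)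
        = UU y * mm y := by
      intro y
      have e : ∀ z : HH G, UU (y * z) * (mm y * convPow mm n z)
          = UU y * (mm y * convPow mm n z) + mm y * (UU z * convPow mm n z) := by
        intro z; rw [UU_mul]; ring
      have s1 : Summable fun z : HH G => UU y * (mm y * convPow mm n z) :=
        (((hρs n).of_abs.mul_left (mm y)).mul_left (UU y))
      have s2 : Summable fun z : HH G => mm y * (UU z * convPow mm n z) :=
        ih.1.mul_left (mm y)
      rw [tsum_congr e, Summable.tsum_add s1 s2, tsum_mul_left, tsum_mul_left, tsum_mul_left,
        hρ1 n, ih.2]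
      ring
    have hfin : ∑' y : HH G, UU y * mm y = 0 := by
      rw [tsum_liftM_weight]
      rw [tsum_congr (fun g => by rw [UU_liftF])]
      exact hfb0
    refine ⟨H.summable, ?_⟩
    show ∑' x : HH G, UU x * conv mm (convPow mm n) x = 0
    rw [H.tsum_eq, tsum_congr hval, hfin]

theorem sqU (hμ0 : ∀ g, 0 ≤ μ g) (hμs : Summable fun g => |μ g|) (hμ1 : ∑' g, μ g = 1)
    (hB : ∀ g, |fb g| ≤ B) (hfbs : Summable fun g => fb g * μ g)
    (hfb0 : ∑' g, fb g * μ g = 0) (k : ℕ) :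
    (Summable fun x : HH G => UU x ^ 2 * convPow mm k x) ∧
      ∑' x : HH G, UU x ^ 2 * convPow mm k x = k * ∑' g, fb g ^ 2 * μ g := by
  have hms : Summable fun x : HH G => |mm x| := summable_liftM_abs hμs
  have hρs : ∀ j, Summable fun x : HH G => |convPow mm j x| :=
    fun j => summable_convPow_abs hms j
  have hρ1 : ∀ j, ∑' x : HH G, convPow mm j x = 1 :=
    tsum_convPow (liftM_nonneg hμ0) hms (by rw [tsum_liftM]; exact hμ1)
  have hfb2 : Summable fun g => fb g ^ 2 * μ g := by
    refine Summable.of_nonneg_of_le (fun g => mul_nonneg (sq_nonneg _) (hμ0 g)) (fun g => ?_)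
      ((hμs.of_abs.mul_left (B^2)))
    have : fb g ^ 2 ≤ B ^ 2 := by
      rw [← sq_abs]
      exact pow_le_pow_left₀ (abs_nonneg _) (hB g) 2
    exact mul_le_mul_of_nonneg_right this (hμ0 g)
  have hUm2 : Summable fun y : HH G => UU y ^ 2 * mm y :=
    summable_liftM_weight fb fs (φ := fun x => UU x ^ 2)
      (hfb2.congr fun g => by
        show fb g ^ 2 * μ g = UU (liftF fb fs g) ^ 2 * μ g
        rw [UU_liftF])
  have hUm2v : ∑' y : HH G, UU y ^ 2 * mm y = ∑' g, fb g ^ 2 * μ g := by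
    rw [tsum_liftM_weight]
    exact tsum_congr fun g => by
      show UU (liftF fb fs g) ^ 2 * μ g = fb g ^ 2 * μ g
      rw [UU_liftF]
  induction k with
  | zero =>
    have hz : ∀ x : HH G, UU x ^ 2 * convPow mm 0 x = 0 := by
      intro x
      rcases eq_or_ne x 1 with h | h
      · rw [h, UU_one]; norm_num
      · rw [show convPow mm 0 x = 0 by simp [convPow, Set.indicator_apply, h], mul_zero]
    constructor
    · exact summable_zero.congr fun x => (hz x).symm
    · rw [tsum_congr hz, tsum_zero]; simp
  | succ n ih =>
    have hw := summable_weight_of_bounded (φ := fun x => UU x ^ 2) (M := (B + n * B) ^ 2)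
      hms (hρs n)
      (fun y z hy hz => by
        have h1 : |UU (y * z)| ≤ B + n * B := by
          rw [UU_mul]
          exact (abs_add_le _ _).trans
            (add_le_add (liftM_ne_zero_bound hB hy) (convPow_liftM_UU_bound hB n z hz))
        calc |UU (y * z) ^ 2| = |UU (y * z)| ^ 2 := by rw [abs_pow]
          _ ≤ (B + n * B) ^ 2 := pow_le_pow_left₀ (abs_nonneg _) h1 2)
    have H := hasSum_weight_conv (φ := fun x => UU x ^ 2) hms (hρs n) hw
    have hmean := meanU (fs := fs) hμ0 hμs hμ1 hB hfbs hfb0 n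
    have hval : ∀ y : HH G, ∑' z : HH G, UU (y * z) ^ 2 * (mm y * convPow mm n z)
        = UU y ^ 2 * mm y + mm y * (n * ∑' g, fb g ^ 2 * μ g) := by
      intro y
      have e : ∀ z : HH G, UU (y * z) ^ 2 * (mm y * convPow mm n z)
          = UU y ^ 2 * (mm y * convPow mm n z) + ((2 * UU y * mm y) * (UU z * convPow mm n z)
            + mm y * (UU z ^ 2 * convPow mm n z)) := by
        intro z; rw [UU_mul]; ring
      have s1 : Summable fun z : HH G => UU y ^ 2 * (mm y * convPow mm n z) :=
        ((hρs n).of_abs.mul_left (mm y)).mul_left _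
      have s2 : Summable fun z : HH G => (2 * UU y * mm y) * (UU z * convPow mm n z) :=
        hmean.1.mul_left _
      have s3 : Summable fun z : HH G => mm y * (UU z ^ 2 * convPow mm n z) :=
        ih.1.mul_left _
      rw [tsum_congr e, Summable.tsum_add s1 (s2.add s3), Summable.tsum_add s2 s3, tsum_mul_left, tsum_mul_left,
        tsum_mul_left, tsum_mul_left, hρ1 n, hmean.2, ih.2]
      ring
    refine ⟨H.summable, ?_⟩
    show ∑' x : HH G, UU x ^ 2 * conv mm (convPow mm n) x = _
    rw [H.tsum_eq, tsum_congr hval,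
      Summable.tsum_add hUm2 (hms.of_abs.mul_right _),
      tsum_mul_right, tsum_liftM, hμ1, hUm2v]
    push_cast
    ring

end Moments2

section Moments3

variable {G : Type*} [Group G] {μ fb fs : G → ℝ}

local notation "mm" => liftM fb fs μ

theorem absV (hμ0 : ∀ g, 0 ≤ μ g) (hμs : Summable fun g => |μ g|) (hμ1 : ∑' g, μ g = 1)
    (hfss : Summable fun g => |fs g| * μ g) (k : ℕ) :
    (Summable fun x : HH G => |VV x| * convPow mm k x) ∧
      ∑' x : HH G, |VV x| * convPow mm k x ≤ k * ∑' g, |fs g| * μ g := by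
  have hms : Summable fun x : HH G => |mm x| := summable_liftM_abs hμs
  have hρs : ∀ j, Summable fun x : HH G => |convPow mm j x| :=
    fun j => summable_convPow_abs hms j
  have hρ0 : ∀ j x, 0 ≤ convPow mm j x := convPow_nonneg (liftM_nonneg hμ0)
  have hρ1 : ∀ j, ∑' x : HH G, convPow mm j x = 1 :=
    tsum_convPow (liftM_nonneg hμ0) hms (by rw [tsum_liftM]; exact hμ1)
  have hVm : Summable fun y : HH G => |VV y| * mm y :=
    summable_liftM_weight fb fs (φ := fun x => |VV x|)
      (hfss.congr fun g => by
        show |fs g| * μ g = |VV (liftF fb fs g)| * μ g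
        rw [VV_liftF])
  have hVmv : ∑' y : HH G, |VV y| * mm y = ∑' g, |fs g| * μ g := by
    rw [tsum_liftM_weight]
    exact tsum_congr fun g => by
      show |VV (liftF fb fs g)| * μ g = |fs g| * μ g
      rw [VV_liftF]
  have hSv : 0 ≤ ∑' g, |fs g| * μ g :=
    tsum_nonneg fun g => mul_nonneg (abs_nonneg _) (hμ0 g)
  induction k with
  | zero =>
    have hz : ∀ x : HH G, |VV x| * convPow mm 0 x = 0 := by
      intro x
      rcases eq_or_ne x 1 with h | h
      · rw [h, VV_one]; simp
      · rw [show convPow mm 0 x = 0 by simp [convPow, Set.indicator_apply, h], mul_zero]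
    constructor
    · exact summable_zero.congr fun x => (hz x).symm
    · rw [tsum_congr hz, tsum_zero]; simp
  | succ n ih =>
    have hw := summable_weight_of_subadd (φ := fun x => |VV x|)
      (ψ := fun x => |VV x|) (χ := fun x => |VV x|)
      (fun _ => abs_nonneg _) (fun _ => abs_nonneg _)
      (hVm.congr fun y => by
        rw [abs_of_nonneg (liftM_nonneg hμ0 y)])
      (hρs n) hms
      ((ih.1).congr fun z => by rw [abs_of_nonneg (hρ0 n z)])
      (fun y z _ _ => by
        rw [abs_abs, VV_mul]
        exact abs_add_le _ _)
    have H := hasSum_weight_conv (φ := fun x => |VV x|) hms (hρs n) hw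
    -- pointwise bound on the inner sums
    have hinner : ∀ y : HH G, ∑' z : HH G, |VV (y * z)| * (mm y * convPow mm n z)
        ≤ |VV y| * mm y + mm y * ∑' x : HH G, |VV x| * convPow mm n x := by
      intro y
      have s1 : Summable fun z : HH G => |VV y| * (mm y * convPow mm n z) :=
        (((hρs n).of_abs.mul_left (mm y)).mul_left _)
      have s2 : Summable fun z : HH G => mm y * (|VV z| * convPow mm n z) :=
        ih.1.mul_left _
      have sL : Summable fun z : HH G => |VV (y * z)| * (mm y * convPow mm n z) := by
        have h0 : Summable fun z : HH G =>
            |(fun x : HH G => |VV x|) (y * z) * (mm y * convPow mm n z)| :=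
          hw.comp_injective (i := fun z : HH G => (y, z)) (fun _ _ h => congrArg Prod.snd h)
        exact (h0.of_abs).congr fun z => rfl
      calc ∑' z : HH G, |VV (y * z)| * (mm y * convPow mm n z)
          ≤ ∑' z : HH G, (|VV y| * (mm y * convPow mm n z)
            + mm y * (|VV z| * convPow mm n z)) := by
            refine Summable.tsum_le_tsum (fun z => ?_) sL (s1.add s2)
            have h1 : |VV (y * z)| ≤ |VV y| + |VV z| := by
              rw [VV_mul]; exact abs_add_le _ _
            have h2 : 0 ≤ mm y * convPow mm n z :=
              mul_nonneg (liftM_nonneg hμ0 y) (hρ0 n z)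
            nlinarith [abs_nonneg (VV z), abs_nonneg (VV y), hρ0 n z,
              liftM_nonneg hμ0 (fb := fb) (fs := fs) y,
              mul_le_mul_of_nonneg_right h1 h2]
        _ = |VV y| * mm y + mm y * ∑' x : HH G, |VV x| * convPow mm n x := by
            rw [Summable.tsum_add s1 s2, tsum_mul_left, tsum_mul_left, tsum_mul_left, hρ1 n]
            ring
    have houter_nonneg : ∀ y : HH G,
        0 ≤ ∑' z : HH G, |VV (y * z)| * (mm y * convPow mm n z) :=
      fun y => tsum_nonneg fun z => mul_nonneg (abs_nonneg _)
        (mul_nonneg (liftM_nonneg hμ0 y) (hρ0 n z))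
    have hmaj : Summable fun y : HH G =>
        |VV y| * mm y + mm y * ∑' x : HH G, |VV x| * convPow mm n x :=
      hVm.add (hms.of_abs.mul_right _)
    have hLsum : Summable fun y : HH G => ∑' z : HH G, |VV (y * z)| * (mm y * convPow mm n z) :=
      Summable.of_nonneg_of_le houter_nonneg hinner hmaj
    refine ⟨H.summable, ?_⟩
    show ∑' x : HH G, |VV x| * conv mm (convPow mm n) x ≤ _
    rw [H.tsum_eq]
    calc ∑' y : HH G, ∑' z : HH G, |VV (y * z)| * (mm y * convPow mm n z)
        ≤ ∑' y : HH G, (|VV y| * mm y + mm y * ∑' x : HH G, |VV x| * convPow mm n x) :=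
          Summable.tsum_le_tsum hinner hLsum hmaj
      _ = ∑' g, |fs g| * μ g + ∑' x : HH G, |VV x| * convPow mm n x := by
          rw [Summable.tsum_add hVm (hms.of_abs.mul_right _), tsum_mul_right, tsum_liftM, hμ1, hVmv]
          ring
      _ ≤ ∑' g, |fs g| * μ g + n * ∑' g, |fs g| * μ g := by
          exact add_le_add_right ih.2 _
      _ = (n + 1 : ℕ) * ∑' g, |fs g| * μ g := by push_cast; ring

end Moments3

section PartIII

variable {G : Type*} [Group G] {μ fb fs η : G → ℝ} {B : ℝ}

local notation "mm" => liftM fb fs μ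
local notation "ee" => liftM fb fs η

theorem WW_liftF (g : G) : WW (liftF fb fs g) = fb g + fs g := by
  rw [WW, UU_liftF, VV_liftF]

/-- `N_k x = W x * ρ_k x` -/
noncomputable def NN (μ fb fs : G → ℝ) (k : ℕ) : HH G → ℝ :=
  fun x => WW x * convPow (liftM fb fs μ) k x

theorem summable_absU_rho (hμ0 : ∀ g, 0 ≤ μ g) (hμs : Summable fun g => |μ g|)
    (hB : ∀ g, |fb g| ≤ B) (k : ℕ) :
    Summable fun x : HH G => |UU x| * convPow mm k x := by
  have hms : Summable fun x : HH G => |mm x| := summable_liftM_abs hμs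
  have hρ0 : ∀ x, 0 ≤ convPow mm k x := convPow_nonneg (liftM_nonneg hμ0) k
  refine Summable.of_nonneg_of_le
    (fun x => mul_nonneg (abs_nonneg _) (hρ0 x)) (fun x => ?_)
    (((summable_convPow_abs hms k).of_abs).mul_left (k * B))
  rcases eq_or_ne (convPow mm k x) 0 with h | h
  · rw [h, mul_zero, mul_zero]
  · exact mul_le_mul_of_nonneg_right (convPow_liftM_UU_bound hB k x h) (hρ0 x)

theorem summable_absW_rho (hμ0 : ∀ g, 0 ≤ μ g) (hμs : Summable fun g => |μ g|)
    (hμ1 : ∑' g, μ g = 1) (hB : ∀ g, |fb g| ≤ B)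
    (hfss : Summable fun g => |fs g| * μ g) (k : ℕ) :
    (Summable fun x : HH G => |WW x| * convPow mm k x) ∧
      ∑' x : HH G, |WW x| * convPow mm k x
        ≤ (∑' x : HH G, |UU x| * convPow mm k x) +
          ∑' x : HH G, |VV x| * convPow mm k x := by
  have hρ0 : ∀ x, 0 ≤ convPow mm k x := convPow_nonneg (liftM_nonneg hμ0) k
  have hU := summable_absU_rho (fs := fs) hμ0 hμs hB k
  have hV := (absV (fb := fb) hμ0 hμs hμ1 hfss k).1
  have hle : ∀ x : HH G, |WW x| * convPow mm k x
      ≤ |UU x| * convPow mm k x + |VV x| * convPow mm k x := by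
    intro x
    have h1 : |WW x| ≤ |UU x| + |VV x| := abs_add_le _ _
    nlinarith [hρ0 x, mul_le_mul_of_nonneg_right h1 (hρ0 x)]
  have hsum : Summable fun x : HH G => |WW x| * convPow mm k x :=
    Summable.of_nonneg_of_le (fun x => mul_nonneg (abs_nonneg _) (hρ0 x)) hle (hU.add hV)
  exact ⟨hsum, by
    rw [← Summable.tsum_add hU hV]
    exact Summable.tsum_le_tsum hle hsum (hU.add hV)⟩

theorem summable_NN_abs (hμ0 : ∀ g, 0 ≤ μ g) (hμs : Summable fun g => |μ g|)
    (hμ1 : ∑' g, μ g = 1) (hB : ∀ g, |fb g| ≤ B)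
    (hfss : Summable fun g => |fs g| * μ g) (k : ℕ) :
    Summable fun x : HH G => |NN μ fb fs k x| :=
  ((summable_absW_rho hμ0 hμs hμ1 hB hfss k).1).congr fun x => by
    rw [NN, abs_mul, abs_of_nonneg (convPow_nonneg (liftM_nonneg hμ0) k x)]

theorem liftM_eta (hη : ∀ g, η g = (fb g + fs g) * μ g) (y : HH G) :
    ee y = WW y * mm y := by
  rcases eq_or_ne y (liftF fb fs y.1) with h | h
  · rw [h, liftM_apply_liftF, liftM_apply_liftF, WW_liftF]
    exact hη y.1
  · rw [show ee y = 0 from by simp only [liftM]; exact if_neg h,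
      show mm y = 0 from by simp only [liftM]; exact if_neg h, mul_zero]

theorem NN_succ (hμ0 : ∀ g, 0 ≤ μ g) (hμs : Summable fun g => |μ g|)
    (hμ1 : ∑' g, μ g = 1) (hB : ∀ g, |fb g| ≤ B)
    (hfss : Summable fun g => |fs g| * μ g)
    (hηs : Summable fun g => |η g|)
    (hη : ∀ g, η g = (fb g + fs g) * μ g) (k : ℕ) :
    NN μ fb fs (k + 1) = fun x =>
      conv ee (convPow mm k) x + conv mm (NN μ fb fs k) x := by
  have hms : Summable fun x : HH G => |mm x| := summable_liftM_abs hμs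
  have hes : Summable fun x : HH G => |ee x| := summable_liftM_abs hηs
  have hρs : Summable fun x : HH G => |convPow mm k x| := summable_convPow_abs hms k
  have hNs : Summable fun x : HH G => |NN μ fb fs k x| :=
    summable_NN_abs hμ0 hμs hμ1 hB hfss k
  funext x
  have sA : Summable fun y : HH G => ee y * convPow mm k (y⁻¹ * x) :=
    summable_inner hes hρs x
  have sB : Summable fun y : HH G => mm y * NN μ fb fs k (y⁻¹ * x) :=
    summable_inner hms hNs x
  have key : ∀ y : HH G,
      ee y * convPow mm k (y⁻¹ * x) + mm y * NN μ fb fs k (y⁻¹ * x)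
        = WW x * (mm y * convPow mm k (y⁻¹ * x)) := by
    intro y
    rw [liftM_eta hη, NN,
      show WW x = WW y + WW (y⁻¹ * x) from by rw [← WW_mul, mul_inv_cancel_left]]
    ring
  show WW x * conv mm (convPow mm k) x = conv ee (convPow mm k) x + conv mm (NN μ fb fs k) x
  have hadd : conv ee (convPow mm k) x + conv mm (NN μ fb fs k) x
      = ∑' y : HH G, (ee y * convPow mm k (y⁻¹ * x) + mm y * NN μ fb fs k (y⁻¹ * x)) :=
    (Summable.tsum_add sA sB).symm
  rw [hadd, tsum_congr key, conv]
  exact tsum_mul_left.symm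

/-- projection to `G` -/
noncomputable def PP (ν : HH G → ℝ) : G → ℝ :=
  fun g => ∑' t : Multiplicative ℝ × Multiplicative ℝ, ν (g, t)

theorem PP_conv_liftM {σ : G → ℝ} {ν : HH G → ℝ} (hσ : Summable fun g => |σ g|)
    (hν : Summable fun x : HH G => |ν x|) :
    PP (conv (liftM fb fs σ) ν) = conv σ (PP ν) := by
  funext g
  have hcollapse : ∀ x : HH G,
      conv (liftM fb fs σ) ν x = ∑' h : G, σ h * ν ((liftF fb fs h)⁻¹ * x) := by
    intro x
    rw [conv, ← Function.Injective.tsum_eq (liftF_injective fb fs)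
      (f := fun y => liftM fb fs σ y * ν (y⁻¹ * x)) ?_]
    · exact tsum_congr fun h => by
        show liftM fb fs σ (liftF fb fs h) * ν ((liftF fb fs h)⁻¹ * x) = _
        rw [liftM_apply_liftF]
    · intro y hy
      rw [Function.mem_support] at hy
      by_contra hr
      exact hy (by
        show liftM fb fs σ y * ν (y⁻¹ * x) = 0
        rw [liftM_eq_zero fb fs σ hr, zero_mul])
  have Cσ : ∀ h, |σ h| ≤ ∑' h', |σ h'| := fun h => Summable.le_tsum hσ h fun _ _ => abs_nonneg _
  have Cν : ∀ x, |ν x| ≤ ∑' x', |ν x'| := fun x => Summable.le_tsum hν x fun _ _ => abs_nonneg _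
  set T := Multiplicative ℝ × Multiplicative ℝ
  have hι : Function.Injective
      (fun q : G × T => (liftF fb fs q.1)⁻¹ * (g, q.2) : G × T → HH G) := by
    intro q q' he
    have h1 : q.1⁻¹ * g = q'.1⁻¹ * g := congrArg Prod.fst he
    have h2 : q.1 = q'.1 := by
      have := mul_right_cancel h1; exact inv_injective this
    have h4 : ((liftF fb fs q.1)⁻¹ * ((g : G), q.2) : HH G)
        = (liftF fb fs q'.1)⁻¹ * ((g : G), q'.2) := he
    rw [← h2] at h4
    have h6 : ((g : G), q.2) = ((g : G), q'.2) := mul_left_cancel h4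
    have h7 : q.2 = q'.2 := by simpa using congrArg Prod.snd h6
    exact Prod.ext_iff.2 ⟨h2, h7⟩
  have huncurry : Summable (Function.uncurry fun (h : G) (t : T) =>
      σ h * ν ((liftF fb fs h)⁻¹ * (g, t))) := by
    refine Summable.of_abs (Summable.of_nonneg_of_le (fun q => abs_nonneg _) (fun q => ?_)
      ((hν.comp_injective hι).mul_left (∑' h', |σ h'|)))
    rw [Function.uncurry, abs_mul]
    exact mul_le_mul_of_nonneg_right (Cσ _) (abs_nonneg _)
  have hslice1 : ∀ h : G, Summable fun t : T => σ h * ν ((liftF fb fs h)⁻¹ * (g, t)) := by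
    intro h
    have hbase : Summable fun t : T => ν (h⁻¹ * g, t) := (hν.of_abs).prod_factor (h⁻¹ * g)
    have h5 : Summable fun t : T => ν (h⁻¹ * g, ((liftF fb fs h).2)⁻¹ * t) := by
      have e := (Equiv.mulLeft (((liftF fb fs h).2)⁻¹)).summable_iff
        (f := fun t : T => ν (h⁻¹ * g, t))
      exact (e.2 hbase).congr fun t => rfl
    exact (h5.mul_left (σ h)).congr fun t => rfl
  have hslice2 : ∀ t : T, Summable fun h : G => σ h * ν ((liftF fb fs h)⁻¹ * (g, t)) := by
    intro t
    refine Summable.of_abs (Summable.of_nonneg_of_le (fun h => abs_nonneg _) (fun h => ?_)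
      (hσ.mul_right (∑' x', |ν x'|)))
    rw [abs_mul]
    exact mul_le_mul_of_nonneg_left (Cν _) (abs_nonneg _)
  calc PP (conv (liftM fb fs σ) ν) g
      = ∑' (t : T), ∑' (h : G), σ h * ν ((liftF fb fs h)⁻¹ * (g, t)) := by
        rw [PP]; exact tsum_congr fun t => hcollapse (g, t)
    _ = ∑' (h : G), ∑' (t : T), σ h * ν ((liftF fb fs h)⁻¹ * (g, t)) :=
        Summable.tsum_comm' huncurry hslice1 hslice2
    _ = ∑' (h : G), σ h * PP ν (h⁻¹ * g) := by
        refine tsum_congr fun h => ?_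
        have hPP : PP ν (h⁻¹ * g) = ∑' t : T, ν ((liftF fb fs h)⁻¹ * (g, t)) := by
          rw [PP]
          exact ((Equiv.mulLeft (((liftF fb fs h).2)⁻¹)).tsum_eq
            fun t : T => ν (h⁻¹ * g, t)).symm
        rw [hPP, tsum_mul_left]
    _ = conv σ (PP ν) g := rfl

theorem PP_rho (hμs : Summable fun g => |μ g|) (k : ℕ) :
    PP (convPow mm k) = convPow μ k := by
  induction k with
  | zero =>
    funext g
    rw [PP]
    rw [tsum_eq_single (1 : Multiplicative ℝ × Multiplicative ℝ) ?_]
    · rcases eq_or_ne g 1 with h | h <;>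
        simp [convPow, Set.indicator_apply, h, Prod.ext_iff]
    · intro t ht
      have : (g, t) ≠ (1 : HH G) := fun hc => ht (congrArg Prod.snd hc)
      simp [convPow, Set.indicator_apply, this]
  | succ n ih =>
    have : PP (conv mm (convPow mm n)) = conv μ (PP (convPow mm n)) :=
      PP_conv_liftM hμs (summable_convPow_abs (summable_liftM_abs hμs) n)
    show PP (conv mm (convPow mm n)) = conv μ (convPow μ n)
    rw [this, ih]

end PartIII

section PartIV

variable {G : Type*} [Group G] {μ fb fs η : G → ℝ} {B : ℝ}

local notation "mm" => liftM fb fs μ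
local notation "ee" => liftM fb fs η

/-- The Cesàro sum whose total variation we bound. -/
noncomputable def Sfun (μ η : G → ℝ) (k : ℕ) : G → ℝ :=
  fun g => ∑ i ∈ Finset.range k, conv (convPow μ i) (conv η (convPow μ (k - 1 - i))) g

theorem Sfun_succ (hμs : Summable fun g => |μ g|) (hηs : Summable fun g => |η g|) (k : ℕ) :
    Sfun μ η (k + 1) = fun g => conv η (convPow μ k) g + conv μ (Sfun μ η k) g := by
  funext g
  have hpow : ∀ j, Summable fun x => |convPow μ j x| := summable_convPow_abs hμs
  have hce : ∀ j, Summable fun x => |conv η (convPow μ j) x| :=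
    fun j => summable_conv_abs hηs (hpow j)
  show ∑ i ∈ Finset.range (k + 1), conv (convPow μ i) (conv η (convPow μ (k + 1 - 1 - i))) g = _
  have hidx : ∀ i, k + 1 - 1 - i = k - i := fun i => by omega
  rw [Finset.sum_congr rfl fun i _ => by rw [hidx i]]
  rw [Finset.sum_range_succ' (fun i => conv (convPow μ i) (conv η (convPow μ (k - i))) g) k]
  have h0 : conv (convPow μ 0) (conv η (convPow μ (k - 0))) g = conv η (convPow μ k) g := by
    rw [show (convPow μ 0 : G → ℝ) = ({1} : Set G).indicator fun _ => (1:ℝ) from rfl,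
      delta_conv, Nat.sub_zero]
  have hstep : ∀ i, conv (convPow μ (i + 1)) (conv η (convPow μ (k - (i + 1)))) g
      = conv μ (conv (convPow μ i) (conv η (convPow μ (k - 1 - i)))) g := by
    intro i
    have : k - (i + 1) = k - 1 - i := by omega
    rw [this, show (convPow μ (i+1) : G → ℝ) = conv μ (convPow μ i) from rfl,
      conv_assoc hμs (hpow i) (hce _)]
  rw [Finset.sum_congr rfl fun i _ => hstep i]
  have hconvsum : conv μ (Sfun μ η k) g
      = ∑ i ∈ Finset.range k, conv μ (conv (convPow μ i) (conv η (convPow μ (k - 1 - i)))) g := by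
    have := conv_sum (s := Finset.range k)
      (b := fun i => conv (convPow μ i) (conv η (convPow μ (k - 1 - i)))) hμs
      (fun i _ => summable_conv_abs (hpow i) (hce _))
    exact congrFun this g
  rw [← hconvsum, h0, add_comm]

theorem PP_NN (hμ0 : ∀ g, 0 ≤ μ g) (hμs : Summable fun g => |μ g|)
    (hμ1 : ∑' g, μ g = 1) (hB : ∀ g, |fb g| ≤ B)
    (hfss : Summable fun g => |fs g| * μ g)
    (hηs : Summable fun g => |η g|)
    (hη : ∀ g, η g = (fb g + fs g) * μ g) (k : ℕ) :
    PP (NN μ fb fs k) = Sfun μ η k := by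
  have hms : Summable fun x : HH G => |mm x| := summable_liftM_abs hμs
  have hes : Summable fun x : HH G => |ee x| := summable_liftM_abs hηs
  induction k with
  | zero =>
    funext g
    have hz : ∀ x : HH G, NN μ fb fs 0 x = 0 := by
      intro x
      rcases eq_or_ne x 1 with h | h
      · rw [NN, h, show WW (1 : HH G) = 0 from by rw [WW, UU_one, VV_one]; ring, zero_mul]
      · rw [NN, show convPow mm 0 x = 0 by simp [convPow, Set.indicator_apply, h], mul_zero]
    rw [PP]
    rw [tsum_congr fun t => hz (g, t), tsum_zero]
    rw [Sfun]
    simp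
  | succ n ih =>
    have hρs : Summable fun x : HH G => |convPow mm n x| := summable_convPow_abs hms n
    have hNs : Summable fun x : HH G => |NN μ fb fs n x| :=
      summable_NN_abs hμ0 hμs hμ1 hB hfss n
    have hA : Summable (conv ee (convPow mm n)) := summable_conv (hes) hρs
    have hB2 : Summable (conv mm (NN μ fb fs n)) := summable_conv hms hNs
    funext g
    rw [NN_succ hμ0 hμs hμ1 hB hfss hηs hη n]
    have hsplit : PP (fun x : HH G =>
        conv ee (convPow mm n) x + conv mm (NN μ fb fs n) x) g
        = PP (conv ee (convPow mm n)) g + PP (conv mm (NN μ fb fs n)) g := by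
      rw [PP, PP, PP]
      exact Summable.tsum_add (hA.prod_factor g) (hB2.prod_factor g)
    rw [hsplit, PP_conv_liftM hηs hρs, PP_conv_liftM hμs hNs, PP_rho hμs, ih,
      Sfun_succ hμs hηs n]

theorem tsum_abs_Sfun_le (hμ0 : ∀ g, 0 ≤ μ g) (hμs : Summable fun g => |μ g|)
    (hμ1 : ∑' g, μ g = 1) (hB : ∀ g, |fb g| ≤ B)
    (hfss : Summable fun g => |fs g| * μ g)
    (hηs : Summable fun g => |η g|)
    (hη : ∀ g, η g = (fb g + fs g) * μ g) (k : ℕ) :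
    ∑' g, |Sfun μ η k g| ≤ (∑' x : HH G, |UU x| * convPow mm k x) +
      ∑' x : HH G, |VV x| * convPow mm k x := by
  have hNs : Summable fun x : HH G => |NN μ fb fs k x| :=
    summable_NN_abs hμ0 hμs hμ1 hB hfss k
  set q : G → ℝ := fun g => ∑' t : Multiplicative ℝ × Multiplicative ℝ, |NN μ fb fs k (g, t)|
    with hqdef
  have hq : HasSum q (∑' x : HH G, |NN μ fb fs k x|) :=
    hNs.hasSum.prod_fiberwise fun g => (hNs.prod_factor g).hasSum
  have hpt : ∀ g, |Sfun μ η k g| ≤ q g := by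
    intro g
    rw [← PP_NN hμ0 hμs hμ1 hB hfss hηs hη k, PP]
    calc |∑' t, NN μ fb fs k (g, t)| ≤ ∑' t, |NN μ fb fs k (g, t)| := by
          have := norm_tsum_le_tsum_norm (f := fun t => NN μ fb fs k (g, t))
            ((hNs.prod_factor g).congr fun t => by rw [Real.norm_eq_abs])
          simpa [Real.norm_eq_abs] using this
      _ = q g := rfl
  have hSsum : Summable fun g => |Sfun μ η k g| :=
    Summable.of_nonneg_of_le (fun g => abs_nonneg _) hpt hq.summable
  calc ∑' g, |Sfun μ η k g| ≤ ∑' g, q g := Summable.tsum_le_tsum hpt hSsum hq.summable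
    _ = ∑' x : HH G, |NN μ fb fs k x| := hq.tsum_eq
    _ = ∑' x : HH G, |WW x| * convPow mm k x := by
        refine tsum_congr fun x => ?_
        rw [NN, abs_mul, abs_of_nonneg (convPow_nonneg (liftM_nonneg hμ0) k x)]
    _ ≤ _ := (summable_absW_rho hμ0 hμs hμ1 hB hfss k).2

end PartIV

theorem abs_le_lam_add_sq_div {u lam : ℝ} (hlam : 0 < lam) : |u| ≤ lam + u^2 / lam := by
  rcases le_or_gt (|u|) lam with h | h
  · have : 0 ≤ u^2 / lam := div_nonneg (sq_nonneg _) hlam.le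
    linarith
  · have h1 : |u| * lam ≤ u^2 := by
      calc |u| * lam ≤ |u| * |u| := mul_le_mul_of_nonneg_left h.le (abs_nonneg _)
        _ = u^2 := by rw [← abs_mul, ← sq, abs_sq]
    have h2 : |u| ≤ u^2 / lam := (le_div_iff₀ hlam).2 h1
    have : 0 ≤ lam := hlam.le
    linarith

end BCD

open BCD in
theorem balanced_convolution_decay'
    {G : Type*} [Group G]
    (μ : G → ℝ) (hμ0 : ∀ g, 0 ≤ μ g) (hμsum : Summable μ) (hμ1 : ∑' g, μ g = 1)
    (η : G → ℝ) (hη : Summable fun g : G => |η g|)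
    (hbal : ∑' g : G, η g = 0)
    (hac : ∀ g : G, μ g = 0 → η g = 0) :
    Filter.Tendsto (fun k : ℕ => (1 / (k : ℝ)) * ∑' g : G, |Sfun μ η k g|)
      Filter.atTop (𝓝 0) := by
  classical
  have hμs : Summable fun g => |μ g| := hμsum.congr fun g => (abs_of_nonneg (hμ0 g)).symm
  set f : G → ℝ := fun g => if μ g = 0 then 0 else η g / μ g with hfdef
  have hηf : ∀ g, η g = f g * μ g := by
    intro g
    by_cases h : μ g = 0
    · rw [hfdef]; simp [h, hac g h]
    · rw [hfdef]; simp only [if_neg h]; field_simp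
  have hfμ : Summable fun g => f g * μ g := hη.of_abs.congr fun g => hηf g
  have hfμ0 : ∑' g, f g * μ g = 0 := by
    rw [← tsum_congr hηf]; exact hbal
  rw [Metric.tendsto_atTop]
  intro ε hε
  set δ : ℝ := ε / 4 with hδdef
  have hδ : 0 < δ := by positivity
  -- choose a finite set with small tail
  obtain ⟨s, hs⟩ : ∃ s : Finset G, dist (∑ g ∈ s, |η g|) (∑' g, |η g|) < δ :=
    ((Metric.tendsto_nhds.1 hη.hasSum) δ hδ).exists
  have htail0 : ∑' (x : ((↑s : Set G)ᶜ : Set G)), |η ↑x| ≤ δ := by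
    have hc := Summable.sum_add_tsum_compl (s := s) hη
    have hle : ∑ g ∈ s, |η g| ≤ ∑' g, |η g| := Summable.sum_le_tsum s (fun g _ => abs_nonneg _) hη
    rw [Real.dist_eq] at hs
    have := abs_lt.1 hs
    linarith [this.1, this.2]
  set fb0 : G → ℝ := fun g => if g ∈ s then f g else 0 with hfb0def
  obtain ⟨B0, hB0⟩ : ∃ B0, ∀ b ∈ s.image fun g => |f g|, b ≤ B0 := Finset.exists_le _
  have hfb0B : ∀ g, |fb0 g| ≤ max B0 0 := by
    intro g
    rw [hfb0def]
    by_cases h : g ∈ s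
    · simp only [if_pos h]
      exact le_trans (hB0 _ (Finset.mem_image_of_mem _ h)) (le_max_left _ _)
    · simp [if_neg h]
  have hsum_fb0μ : Summable fun g => fb0 g * μ g := by
    refine summable_of_ne_finset_zero (s := s) fun g hg => ?_
    rw [hfb0def]
    simp [if_neg hg]
  set m0 : ℝ := ∑' g, fb0 g * μ g with hm0def
  set fb : G → ℝ := fun g => fb0 g - m0 with hfbdef
  set fs : G → ℝ := fun g => f g - fb0 g + m0 with hfsdef
  set B : ℝ := max B0 0 + |m0| with hBdef
  have hB : ∀ g, |fb g| ≤ B := by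
    intro g
    rw [hfbdef, hBdef]
    calc |fb0 g - m0| ≤ |fb0 g| + |m0| := abs_sub _ _
      _ ≤ max B0 0 + |m0| := add_le_add_left (hfb0B g) _
  have hfbs : Summable fun g => fb g * μ g :=
    (hsum_fb0μ.sub (hμsum.mul_left m0)).congr fun g => by rw [hfbdef]; ring
  have hfb0' : ∑' g, fb g * μ g = 0 := by
    have : ∀ g, fb g * μ g = fb0 g * μ g - m0 * μ g := fun g => by rw [hfbdef]; ring
    rw [tsum_congr this, Summable.tsum_sub hsum_fb0μ (hμsum.mul_left m0), tsum_mul_left, hμ1, hm0def]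
    ring
  -- tail estimates
  have htailfun : ∀ g, |f g - fb0 g| * μ g = (if g ∈ s then 0 else |η g|) := by
    intro g
    by_cases h : g ∈ s
    · rw [hfb0def]; simp [if_pos h]
    · rw [hfb0def]; simp only [if_neg h, sub_zero]
      calc |f g| * μ g = |f g| * |μ g| := by rw [abs_of_nonneg (hμ0 g)]
        _ = |f g * μ g| := (abs_mul _ _).symm
        _ = |η g| := by rw [← hηf g]
  have htsum_if : ∑' g, (if g ∈ s then 0 else |η g|) ≤ δ := by
    have h1 := tsum_subtype ((↑s : Set G)ᶜ) fun g => |η g|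
    have h2 : ∀ g, ((↑s : Set G)ᶜ).indicator (fun g => |η g|) g
        = (if g ∈ s then 0 else |η g|) := by
      intro g
      rw [Set.indicator_apply]
      by_cases h : g ∈ s <;> simp [h]
    rw [← tsum_congr h2, ← h1]
    exact htail0
  have hsum_if : Summable fun g => (if g ∈ s then 0 else |η g|) := by
    refine Summable.of_nonneg_of_le (fun g => ?_) (fun g => ?_) hη
    · by_cases h : g ∈ s <;> simp [h]
    · by_cases h : g ∈ s <;> simp [h]
  have hsum_tailμ : Summable fun g => |f g - fb0 g| * μ g :=
    hsum_if.congr fun g => (htailfun g).symm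
  have htailμ : ∑' g, |f g - fb0 g| * μ g ≤ δ := by
    rw [tsum_congr htailfun]; exact htsum_if
  have hm0 : |m0| ≤ δ := by
    have h1 : m0 = ∑' g, (fb0 g - f g) * μ g := by
      have : ∀ g, (fb0 g - f g) * μ g = fb0 g * μ g - f g * μ g := fun g => by ring
      rw [tsum_congr this, Summable.tsum_sub hsum_fb0μ hfμ, hfμ0, hm0def]
      ring
    rw [h1]
    have h2 := norm_tsum_le_tsum_norm (f := fun g => (fb0 g - f g) * μ g)
      (hsum_tailμ.congr fun g => by
        rw [Real.norm_eq_abs, abs_mul, abs_of_nonneg (hμ0 g), abs_sub_comm])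
    rw [Real.norm_eq_abs] at h2
    refine h2.trans ?_
    refine le_trans (le_of_eq (tsum_congr fun g => ?_)) htailμ
    rw [Real.norm_eq_abs, abs_mul, abs_of_nonneg (hμ0 g), abs_sub_comm]
  have hfss : Summable fun g => |fs g| * μ g := by
    refine Summable.of_nonneg_of_le
      (fun g => mul_nonneg (abs_nonneg _) (hμ0 g)) (fun g => ?_)
      (hsum_tailμ.add (hμsum.mul_left |m0|))
    rw [hfsdef]
    calc |f g - fb0 g + m0| * μ g ≤ (|f g - fb0 g| + |m0|) * μ g :=
          mul_le_mul_of_nonneg_right (abs_add_le _ _) (hμ0 g)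
      _ = |f g - fb0 g| * μ g + |m0| * μ g := by ring
  have hSv : ∑' g, |fs g| * μ g ≤ 2 * δ := by
    have hle : ∀ g, |fs g| * μ g ≤ |f g - fb0 g| * μ g + |m0| * μ g := by
      intro g
      rw [hfsdef]
      calc |f g - fb0 g + m0| * μ g ≤ (|f g - fb0 g| + |m0|) * μ g :=
            mul_le_mul_of_nonneg_right (abs_add_le _ _) (hμ0 g)
        _ = |f g - fb0 g| * μ g + |m0| * μ g := by ring
    calc ∑' g, |fs g| * μ g ≤ ∑' g, (|f g - fb0 g| * μ g + |m0| * μ g) :=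
          Summable.tsum_le_tsum hle hfss (hsum_tailμ.add (hμsum.mul_left |m0|))
      _ = (∑' g, |f g - fb0 g| * μ g) + |m0| * ∑' g, μ g := by
          rw [Summable.tsum_add hsum_tailμ (hμsum.mul_left |m0|), tsum_mul_left]
      _ ≤ δ + δ * 1 := by
          refine add_le_add htailμ ?_
          rw [hμ1, mul_one, mul_one]
          exact hm0
      _ = 2 * δ := by ring
  have hηfb : ∀ g, η g = (fb g + fs g) * μ g := by
    intro g
    rw [hfbdef, hfsdef, hηf g]
    ring_nf
  -- the second-moment quantity
  set Vb : ℝ := ∑' g, fb g ^ 2 * μ g with hVbdef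
  have hfb2 : Summable fun g => fb g ^ 2 * μ g := by
    refine Summable.of_nonneg_of_le (fun g => mul_nonneg (sq_nonneg _) (hμ0 g)) (fun g => ?_)
      (hμsum.mul_left (B^2))
    have : fb g ^ 2 ≤ B ^ 2 := by
      rw [← sq_abs]
      exact pow_le_pow_left₀ (abs_nonneg _) (hB g) 2
    exact mul_le_mul_of_nonneg_right this (hμ0 g)
  have hVb0 : 0 ≤ Vb := tsum_nonneg fun g => mul_nonneg (sq_nonneg _) (hμ0 g)
  have hVbB : Vb ≤ B ^ 2 := by
    rw [hVbdef]
    calc ∑' g, fb g ^ 2 * μ g ≤ ∑' g, B ^ 2 * μ g := by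
          refine Summable.tsum_le_tsum (fun g => ?_) hfb2 (hμsum.mul_left (B^2))
          have : fb g ^ 2 ≤ B ^ 2 := by
            rw [← sq_abs]
            exact pow_le_pow_left₀ (abs_nonneg _) (hB g) 2
          exact mul_le_mul_of_nonneg_right this (hμ0 g)
      _ = B ^ 2 * 1 := by rw [tsum_mul_left, hμ1]
      _ = B ^ 2 := mul_one _
  -- main estimate for each k ≥ 1
  have hmain : ∀ k : ℕ, 1 ≤ k →
      ∑' g, |Sfun μ η k g| ≤ δ * k + Vb / δ + 2 * δ * k := by
    intro k hk
    have hkpos : (0 : ℝ) < k := by exact_mod_cast hk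
    have hms : Summable fun x : HH G => |liftM fb fs μ x| := summable_liftM_abs hμs
    have hρs := summable_convPow_abs hms k
    have hρ0 : ∀ x, 0 ≤ convPow (liftM fb fs μ) k x :=
      convPow_nonneg (liftM_nonneg hμ0) k
    have hρ1 : ∑' x : HH G, convPow (liftM fb fs μ) k x = 1 :=
      tsum_convPow (liftM_nonneg hμ0) hms (by rw [tsum_liftM]; exact hμ1) k
    have hsq := sqU (fs := fs) hμ0 hμs hμ1 hB hfbs hfb0' k
    have hU : ∑' x : HH G, |UU x| * convPow (liftM fb fs μ) k x ≤ δ * k + Vb / δ := by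
      set lam : ℝ := δ * k with hlamdef
      have hlam : 0 < lam := by positivity
      have hpt : ∀ x : HH G, |UU x| * convPow (liftM fb fs μ) k x
          ≤ lam * convPow (liftM fb fs μ) k x
            + (1/lam) * (UU x ^ 2 * convPow (liftM fb fs μ) k x) := by
        intro x
        have h1 := abs_le_lam_add_sq_div (u := UU x) hlam
        have h2 := mul_le_mul_of_nonneg_right h1 (hρ0 x)
        calc |UU x| * convPow (liftM fb fs μ) k x
            ≤ (lam + UU x ^ 2 / lam) * convPow (liftM fb fs μ) k x := h2
          _ = lam * convPow (liftM fb fs μ) k x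
              + (1/lam) * (UU x ^ 2 * convPow (liftM fb fs μ) k x) := by
            field_simp
      calc ∑' x : HH G, |UU x| * convPow (liftM fb fs μ) k x
          ≤ ∑' x : HH G, (lam * convPow (liftM fb fs μ) k x
            + (1/lam) * (UU x ^ 2 * convPow (liftM fb fs μ) k x)) := by
            refine Summable.tsum_le_tsum hpt (summable_absU_rho (fs := fs) hμ0 hμs hB k) ?_
            exact (hρs.of_abs.mul_left lam).add (hsq.1.mul_left (1/lam))
        _ = lam * 1 + (1/lam) * (k * Vb) := by
            rw [Summable.tsum_add (hρs.of_abs.mul_left lam) (hsq.1.mul_left (1/lam)),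
              tsum_mul_left, tsum_mul_left, hρ1, hsq.2]
        _ = δ * k + (k / lam) * Vb := by ring
        _ = δ * k + Vb / δ := by
            rw [hlamdef]
            field_simp
    have hV : ∑' x : HH G, |VV x| * convPow (liftM fb fs μ) k x ≤ 2 * δ * k := by
      refine le_trans (absV (fb := fb) hμ0 hμs hμ1 hfss k).2 ?_
      calc (k : ℝ) * ∑' g, |fs g| * μ g ≤ (k : ℝ) * (2 * δ) :=
            mul_le_mul_of_nonneg_left hSv (by positivity)
        _ = 2 * δ * k := by ring
    calc ∑' g, |Sfun μ η k g|
        ≤ (∑' x : HH G, |UU x| * convPow (liftM fb fs μ) k x)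
          + ∑' x : HH G, |VV x| * convPow (liftM fb fs μ) k x :=
          tsum_abs_Sfun_le hμ0 hμs hμ1 hB hfss hη hηfb k
      _ ≤ (δ * k + Vb / δ) + 2 * δ * k := add_le_add hU hV
      _ = δ * k + Vb / δ + 2 * δ * k := by ring
  -- choose N
  refine ⟨⌈Vb / δ ^ 2⌉₊ + 1, fun k hk => ?_⟩
  have hk1 : 1 ≤ k := le_trans (Nat.le_add_left 1 _) hk
  have hkpos : (0 : ℝ) < k := by exact_mod_cast hk1
  have hkbig : Vb / δ ^ 2 < k := by
    calc Vb / δ ^ 2 ≤ (⌈Vb / δ ^ 2⌉₊ : ℝ) := Nat.le_ceil _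
      _ < (⌈Vb / δ ^ 2⌉₊ : ℝ) + 1 := by linarith
      _ ≤ k := by exact_mod_cast hk
  have hT0 : 0 ≤ ∑' g, |Sfun μ η k g| := tsum_nonneg fun g => abs_nonneg _
  have hkey : (1 / (k:ℝ)) * ∑' g, |Sfun μ η k g| < ε := by
    have h1 := hmain k hk1
    have h2 : (1 / (k:ℝ)) * ∑' g, |Sfun μ η k g|
        ≤ (1 / (k:ℝ)) * (δ * k + Vb / δ + 2 * δ * k) := by
      refine mul_le_mul_of_nonneg_left h1 (by positivity)
    have h3 : (1 / (k:ℝ)) * (δ * k + Vb / δ + 2 * δ * k) = 3 * δ + Vb / (δ * k) := by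
      field_simp
      ring
    have h4 : Vb / (δ * k) < δ := by
      rw [div_lt_iff₀ (by positivity)]
      calc Vb = (Vb / δ ^ 2) * δ ^ 2 := by field_simp
        _ < k * δ ^ 2 := by
          refine mul_lt_mul_of_pos_right hkbig (by positivity)
        _ = δ * (δ * k) := by ring
    calc (1 / (k:ℝ)) * ∑' g, |Sfun μ η k g| ≤ 3 * δ + Vb / (δ * k) := by rw [← h3]; exact h2
      _ < 3 * δ + δ := by linarith
      _ = ε := by rw [hδdef]; ring
  rw [Real.dist_eq, sub_zero, abs_of_nonneg (by positivity)]
  exact hkey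


/-- Cesàro-type total-variation decay for a balanced density (used in the proof of
differentiability of the drift). -/
theorem balanced_convolution_decay
    {G : Type*} [Group G] [Countable G]
    (μ : G → ℝ) (hμ : IsProbMeasure μ)
    (η : G → ℝ) (hη : Summable fun g : G => |η g|)
    (hbal : ∑' g : G, η g = 0)
    (hac : ∀ g : G, μ g = 0 → η g = 0) :
    Filter.Tendsto (fun k : ℕ =>
        (1 / (k : ℝ)) * ∑' g : G,
          |∑ i ∈ Finset.range k, conv (convPow μ i) (conv η (convPow μ (k - 1 - i))) g|)
      Filter.atTop (𝓝 0) := by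
  obtain ⟨hμ0, hμsum, hμ1⟩ := hμ
  exact balanced_convolution_decay' μ hμ0 hμsum hμ1 η hη hbal hac
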